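/- Let L be an even lattice with ⟨u,v⟩ ∈ 2ℤ for all u,v ∈ L, with dual L* and Γ = L*/L. Then the pairing p̄(a, u) := exp(2πi⟨â,u⟩/2) for a ∈ Γ, u ∈ L (with â any representative of a) is well-defined, takes values in {±1}, and descends to a perfect pairing p : Γ/2Γ × L/2L → {±1}. -/

import Mathlib

open Matrix

noncomputable section

/-- The bilinear form on `ℚ^d` given by the Gram matrix `G`. -/
def bilQ {d : ℕ} (G : Matrix (Fin d) (Fin d) ℚ) (x y : Fin d → ℚ) : ℚ :=
  x ⬝ᵥ G.mulVec y

/-- The canonical inclusion of integer vectors into `ℚ^d`. -/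
def intVec {d : ℕ} (v : Fin d → ℤ) : Fin d → ℚ := fun i => (v i : ℚ)

/-- The lattice `L = ℤ^d` sitting inside `ℚ^d`. -/
def latticeL (d : ℕ) : AddSubgroup (Fin d → ℚ) where
  carrier := {x | ∃ v : Fin d → ℤ, x = intVec v}
  zero_mem' := ⟨0, by funext i; simp [intVec]⟩
  add_mem' := by
    rintro x y ⟨v, rfl⟩ ⟨w, rfl⟩
    exact ⟨v + w, by funext i; simp [intVec]⟩
  neg_mem' := by
    rintro x ⟨v, rfl⟩
    exact ⟨-v, by funext i; simp [intVec]⟩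

/-- The dual lattice `L* = {x ∈ ℚ^d : ⟨x, w⟩ ∈ ℤ for all w ∈ L}`. -/
def dualL {d : ℕ} (G : Matrix (Fin d) (Fin d) ℚ) : AddSubgroup (Fin d → ℚ) where
  carrier := {x | ∀ v : Fin d → ℤ, ∃ m : ℤ, bilQ G x (intVec v) = m}
  zero_mem' := fun v => ⟨0, by simp [bilQ]⟩
  add_mem' := by
    intro x y hx hy v
    obtain ⟨m, hm⟩ := hx v
    obtain ⟨m', hm'⟩ := hy v
    refine ⟨m + m', ?_⟩
    simp only [bilQ, add_dotProduct] at *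
    rw [hm, hm']
    push_cast
    ring
  neg_mem' := by
    intro x hx v
    obtain ⟨m, hm⟩ := hx v
    refine ⟨-m, ?_⟩
    simp only [bilQ, neg_dotProduct] at *
    rw [hm]
    push_cast
    ring

/-- The pairing `p̄(x, v) = e^{2πi⟨x,v⟩/2} = (-1)^{⟨x,v⟩}` for `x ∈ L*` (via a
representative) and `v ∈ L`, valued in `{±1} = ℤˣ`. -/
def pairP {d : ℕ} (G : Matrix (Fin d) (Fin d) ℚ) (x : Fin d → ℚ) (v : Fin d → ℤ) : ℤˣ :=
  (-1 : ℤˣ) ^ (bilQ G x (intVec v)).num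

section Helpers

variable {d : ℕ}

lemma intVec_add (v w : Fin d → ℤ) : intVec (v + w) = intVec v + intVec w := by
  funext i; simp [intVec]

lemma intVec_sub (v w : Fin d → ℤ) : intVec (v - w) = intVec v - intVec w := by
  funext i; simp [intVec]

lemma intVec_two_smul (u : Fin d → ℤ) : intVec (2 • u) = (2 : ℚ) • intVec u := by
  funext i; simp [intVec]

lemma bilQ_add_left (G : Matrix (Fin d) (Fin d) ℚ) (x y v : Fin d → ℚ) :
    bilQ G (x + y) v = bilQ G x v + bilQ G y v := add_dotProduct _ _ _

lemma bilQ_sub_left (G : Matrix (Fin d) (Fin d) ℚ) (x y v : Fin d → ℚ) :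
    bilQ G (x - y) v = bilQ G x v - bilQ G y v := sub_dotProduct _ _ _

lemma bilQ_add_right (G : Matrix (Fin d) (Fin d) ℚ) (x y v : Fin d → ℚ) :
    bilQ G x (y + v) = bilQ G x y + bilQ G x v := by
  simp [bilQ, Matrix.mulVec_add, dotProduct_add]

lemma bilQ_sub_right (G : Matrix (Fin d) (Fin d) ℚ) (x y v : Fin d → ℚ) :
    bilQ G x (y - v) = bilQ G x y - bilQ G x v := by
  simp [bilQ, Matrix.mulVec_sub, dotProduct_sub]

lemma bilQ_smul_left (G : Matrix (Fin d) (Fin d) ℚ) (c : ℚ) (x v : Fin d → ℚ) :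
    bilQ G (c • x) v = c * bilQ G x v := by
  simp [bilQ, smul_dotProduct, smul_eq_mul]

lemma bilQ_smul_right (G : Matrix (Fin d) (Fin d) ℚ) (c : ℚ) (x v : Fin d → ℚ) :
    bilQ G x (c • v) = c * bilQ G x v := by
  simp [bilQ, Matrix.mulVec_smul, dotProduct_smul, smul_eq_mul]

lemma bilQ_nsmul_left (G : Matrix (Fin d) (Fin d) ℚ) (x v : Fin d → ℚ) :
    bilQ G (2 • x) v = 2 * bilQ G x v := by
  rw [two_smul, bilQ_add_left]; ring

lemma pairP_eq (G : Matrix (Fin d) (Fin d) ℚ) (x : Fin d → ℚ) (v : Fin d → ℤ) (m : ℤ)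
    (h : bilQ G x (intVec v) = (m : ℚ)) : pairP G x v = (-1 : ℤˣ) ^ m := by
  rw [pairP, h, Rat.num_intCast]

lemma neg__root_.one_zpow_two : (-1 : ℤˣ) ^ (2 : ℤ) = 1 := by
  rw [show (2 : ℤ) = 1 + 1 from rfl, _root_.zpow_add, zpow_one]
  simp

lemma neg__root_.one_zpow_eq_one_iff (a : ℤ) : (-1 : ℤˣ) ^ a = 1 ↔ Even a := by
  constructor
  · intro h
    by_contra hodd
    rw [Int.not_even_iff_odd] at hodd
    obtain ⟨k, hk⟩ := hodd
    rw [hk, _root_.zpow_add, _root_.zpow_mul, zpow_one, neg__root_.one_zpow_two, _root_.one_zpow,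
      one_mul] at h
    exact absurd h (by decide)
  · rintro ⟨k, hk⟩
    rw [hk, ← two_mul, _root_.zpow_mul, neg__root_.one_zpow_two, _root_.one_zpow]

lemma neg__root_.one_zpow_congr (a b : ℤ) (h : Even (a - b)) :
    (-1 : ℤˣ) ^ a = (-1 : ℤˣ) ^ b := by
  obtain ⟨k, hk⟩ := h
  have : a = b + 2 * k := by linarith
  rw [this, _root_.zpow_add, _root_.zpow_mul, neg__root_.one_zpow_two, _root_.one_zpow, mul_one]

end Helpers

/-- Let `L` be a lattice with `⟨u,v⟩ ∈ 2ℤ` for all `u,v ∈ L`, with dual `L*` and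
`Γ = L*/L`. The pairing `p̄(a,u) = e^{2πi⟨â,u⟩/2}` is well-defined (independent of the
representative `â` of `a ∈ Γ = L*/L`, and indeed of `â` modulo `2L* + L`, and of `u`
modulo `2L`), takes values in `{±1}`, is biadditive, and descends to a perfect pairing
`p : Γ/2Γ × L/2L → {±1}`. -/
theorem stmt_13 (d : ℕ) (G : Matrix (Fin d) (Fin d) ℚ) (hsym : G.IsSymm) (hnd : G.det ≠ 0)
    (h2 : ∀ u v : Fin d → ℤ, ∃ m : ℤ, bilQ G (intVec u) (intVec v) = 2 * m) :
    -- values in {±1}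
    (∀ x : Fin d → ℚ, ∀ v : Fin d → ℤ, pairP G x v = 1 ∨ pairP G x v = -1) ∧
    -- well-defined in the first argument modulo 2L* + L
    (∀ x y : Fin d → ℚ, x ∈ dualL G → y ∈ dualL G →
      (∃ z ∈ dualL G, ∃ l ∈ latticeL d, x - y = 2 • z + l) →
      ∀ v : Fin d → ℤ, pairP G x v = pairP G y v) ∧
    -- well-defined in the second argument modulo 2L
    (∀ x : Fin d → ℚ, x ∈ dualL G → ∀ v w : Fin d → ℤ,
      (∃ u : Fin d → ℤ, v - w = 2 • u) → pairP G x v = pairP G x w) ∧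
    -- biadditive
    (∀ x y : Fin d → ℚ, x ∈ dualL G → y ∈ dualL G → ∀ v : Fin d → ℤ,
      pairP G (x + y) v = pairP G x v * pairP G y v) ∧
    (∀ x : Fin d → ℚ, x ∈ dualL G → ∀ v w : Fin d → ℤ,
      pairP G x (v + w) = pairP G x v * pairP G x w) ∧
    -- perfectness: trivial left kernel on Γ/2Γ
    (∀ x : Fin d → ℚ, x ∈ dualL G →
      ((∀ v : Fin d → ℤ, pairP G x v = 1) ↔
        ∃ z ∈ dualL G, ∃ l ∈ latticeL d, x = 2 • z + l)) ∧
    -- perfectness: trivial right kernel on L/2L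
    (∀ v : Fin d → ℤ,
      ((∀ x : Fin d → ℚ, x ∈ dualL G → pairP G x v = 1) ↔
        ∃ u : Fin d → ℤ, v = 2 • u)) := by
  have hdet : IsUnit G.det := isUnit_iff_ne_zero.mpr hnd
  -- the key dual vectors for the right-kernel argument
  have hcalc : ∀ (j : Fin d) (y : Fin d → ℚ),
      bilQ G (Pi.single j 1 ᵥ* G⁻¹) y = y j := by
    intro j y
    rw [bilQ, Matrix.dotProduct_mulVec, Matrix.vecMul_vecMul,
      Matrix.nonsing_inv_mul G hdet, Matrix.vecMul_one, single_dotProduct, one_mul]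
  refine ⟨?_, ?_, ?_, ?_, ?_, ?_, ?_⟩
  · intro x v
    exact Int.units_eq_one_or _
  · rintro x y hx hy ⟨z, hz, l, ⟨w, rfl⟩, hxy⟩ v
    obtain ⟨m, hm⟩ := hx v
    obtain ⟨m', hm'⟩ := hy v
    obtain ⟨mz, hmz⟩ := hz v
    obtain ⟨ml, hml⟩ := h2 w v
    rw [pairP_eq G x v m hm, pairP_eq G y v m' hm']
    apply neg__root_.one_zpow_congr
    have hQ : (m : ℚ) - m' = 2 * mz + 2 * ml := by
      rw [← hm, ← hm', ← bilQ_sub_left, hxy, bilQ_add_left, bilQ_nsmul_left, hmz, hml]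
    have hZ : m - m' = 2 * mz + 2 * ml := by exact_mod_cast hQ
    exact ⟨mz + ml, by linarith⟩
  · rintro x hx v w ⟨u, hu⟩
    obtain ⟨m, hm⟩ := hx v
    obtain ⟨m', hm'⟩ := hx w
    obtain ⟨mu, hmu⟩ := hx u
    rw [pairP_eq G x v m hm, pairP_eq G x w m' hm']
    apply neg__root_.one_zpow_congr
    have hQ : (m : ℚ) - m' = 2 * mu := by
      rw [← hm, ← hm', ← bilQ_sub_right, ← intVec_sub, hu, intVec_two_smul,
        bilQ_smul_right, hmu]
    have hZ : m - m' = 2 * mu := by exact_mod_cast hQ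
    exact ⟨mu, by linarith⟩
  · intro x y hx hy v
    obtain ⟨m, hm⟩ := hx v
    obtain ⟨m', hm'⟩ := hy v
    have hsum : bilQ G (x + y) (intVec v) = ((m + m' : ℤ) : ℚ) := by
      rw [bilQ_add_left, hm, hm']; push_cast; ring
    rw [pairP_eq G (x + y) v (m + m') hsum, pairP_eq G x v m hm, pairP_eq G y v m' hm',
      _root_.zpow_add]
  · intro x hx v w
    obtain ⟨m, hm⟩ := hx v
    obtain ⟨m', hm'⟩ := hx w
    have hsum : bilQ G x (intVec (v + w)) = ((m + m' : ℤ) : ℚ) := by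
      rw [intVec_add, bilQ_add_right, hm, hm']; push_cast; ring
    rw [pairP_eq G x (v + w) (m + m') hsum, pairP_eq G x v m hm, pairP_eq G x w m' hm',
      _root_.zpow_add]
  · intro x hx
    constructor
    · intro h
      have hev : ∀ v : Fin d → ℤ, ∃ k : ℤ, bilQ G x (intVec v) = ((2 * k : ℤ) : ℚ) := by
        intro v
        obtain ⟨m, hm⟩ := hx v
        have h1 := h v
        rw [pairP_eq G x v m hm, neg__root_.one_zpow_eq_one_iff] at h1
        obtain ⟨k, hk⟩ := h1
        exact ⟨k, by rw [hm, hk]; push_cast; ring⟩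
      refine ⟨(2⁻¹ : ℚ) • x, ?_, 0, ⟨0, by funext i; simp [intVec]⟩, ?_⟩
      · intro v
        obtain ⟨k, hk⟩ := hev v
        refine ⟨k, ?_⟩
        rw [bilQ_smul_left, hk]
        push_cast
        ring
      · funext i
        simp [two_smul]
        ring
    · rintro ⟨z, hz, l, ⟨w, rfl⟩, hx'⟩ v
      obtain ⟨mz, hmz⟩ := hz v
      obtain ⟨ml, hml⟩ := h2 w v
      have hQ : bilQ G x (intVec v) = ((2 * (mz + ml) : ℤ) : ℚ) := by
        rw [hx', bilQ_add_left, bilQ_nsmul_left, hmz, hml]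
        push_cast
        ring
      rw [pairP_eq G x v _ hQ, neg__root_.one_zpow_eq_one_iff]
      exact ⟨mz + ml, by ring⟩
  · intro v
    constructor
    · intro h
      have hev : ∀ j : Fin d, Even (v j) := by
        intro j
        have hmem : (Pi.single j 1 ᵥ* G⁻¹) ∈ dualL G := by
          intro w
          exact ⟨w j, hcalc j (intVec w)⟩
        have h1 := h _ hmem
        rw [pairP_eq G _ v (v j) (hcalc j (intVec v)), neg__root_.one_zpow_eq_one_iff] at h1
        exact h1
      refine ⟨fun j => (hev j).choose, ?_⟩
      funext j
      have := (hev j).choose_spec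
      simp only [Pi.smul_apply, smul_eq_mul, two_smul]
      omega
    · rintro ⟨u, rfl⟩ x hx
      obtain ⟨mu, hmu⟩ := hx u
      have hQ : bilQ G x (intVec (2 • u)) = ((2 * mu : ℤ) : ℚ) := by
        rw [intVec_two_smul, bilQ_smul_right, hmu]
        push_cast
        ring
      rw [pairP_eq G x _ _ hQ, neg__root_.one_zpow_eq_one_iff]
      exact ⟨mu, by ring⟩

end
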